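/- For all integers 0 ≤ k ≤ j, the following identity holds in ℚ(q, a): ∑_{h=k}^{j} (−q)^{h−j} q^{k²} [h; k]_+ · a^{−j} q^{j²+h²} [j; h]_+ · (a² q^{2−2j−2h}; q²)_j / (q²;q²)_j = (−q)^{k−j} a^{−j} q^{2k²+j²} [j; k]_+ · (a² q^{2−2j−2k}; q²)_k / (q²;q²)_k. (This is the identity expressing that the reduced numerator closure of a top twist applied to the basis web UP[j,k] in the j-colored HOMFLY-PT skein theory equals the stated closed form.) -/

import Mathlib

noncomputable section

open Finset

/-- The field `ℚ(q, a)` of rational functions in two variables. -/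
abbrev F : Type := FractionRing (MvPolynomial (Fin 2) ℚ)

/-- The variable `q`. -/
def q : F := algebraMap (MvPolynomial (Fin 2) ℚ) F (MvPolynomial.X 0)

/-- The variable `a`. -/
def a : F := algebraMap (MvPolynomial (Fin 2) ℚ) F (MvPolynomial.X 1)

/-- The q-Pochhammer symbol `(x; y)_n = ∏_{j=0}^{n-1} (1 - x yʲ)`. -/
def qPoch (x y : F) (n : ℕ) : F := ∏ i ∈ Finset.range n, (1 - x * y ^ i)

/-- `(q²;q²)_m = ∏_{i=1}^{m} (1 - q^{2i})`. -/
def qp (m : ℕ) : F := qPoch (q ^ 2) (q ^ 2) m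

/-- The positive quantum binomial coefficient `[N; k]₊`. -/
def qbin (N k : ℕ) : F := qp N / (qp k * qp (N - k))

def qbin' (n k : ℕ) : F := if k ≤ n then qbin n k else 0

lemma q_ne_zero : q ≠ 0 := by
  simp only [q, ne_eq, map_eq_zero_iff _ (IsFractionRing.injective (MvPolynomial (Fin 2) ℚ) F)]
  exact MvPolynomial.X_ne_zero 0

lemma a_ne_zero : a ≠ 0 := by
  simp only [a, ne_eq, map_eq_zero_iff _ (IsFractionRing.injective (MvPolynomial (Fin 2) ℚ) F)]
  exact MvPolynomial.X_ne_zero 1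

lemma one_sub_q_pow_ne_zero (n : ℕ) (hn : n ≠ 0) : (1 : F) - q ^ n ≠ 0 := by
  have h1 : (1 : F) - q ^ n =
      algebraMap (MvPolynomial (Fin 2) ℚ) F (1 - (MvPolynomial.X 0) ^ n) := by
    simp [q, map_sub, map_pow]
  rw [h1, ne_eq, map_eq_zero_iff _ (IsFractionRing.injective (MvPolynomial (Fin 2) ℚ) F)]
  intro h
  have h2 : ((MvPolynomial.X 0 : MvPolynomial (Fin 2) ℚ)) ^ n = 1 := by
    linear_combination -h
  have := congrArg MvPolynomial.constantCoeff h2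
  simp [hn] at this

lemma qsq_ne_zero : (q : F) ^ 2 ≠ 0 := pow_ne_zero _ q_ne_zero

lemma qp_ne_zero (m : ℕ) : qp m ≠ 0 := by
  rw [qp, qPoch]
  apply Finset.prod_ne_zero_iff.2
  intro i _
  have : (1 : F) - q ^ 2 * (q ^ 2) ^ i = 1 - q ^ (2 + 2 * i) := by ring
  rw [this]
  exact one_sub_q_pow_ne_zero _ (by omega)

lemma qp_zero : qp 0 = 1 := by simp [qp, qPoch]

lemma qp_succ (n : ℕ) : qp (n + 1) = qp n * (1 - (q ^ 2) ^ (n + 1)) := by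
  rw [qp, qp, qPoch, qPoch, Finset.prod_range_succ]
  ring

lemma qPoch_succ (x y : F) (n : ℕ) :
    qPoch x y (n + 1) = qPoch x y n * (1 - x * y ^ n) := by
  rw [qPoch, qPoch, Finset.prod_range_succ]

lemma qp_add (s d : ℕ) : qp (s + d) = qp s * qPoch ((q ^ 2) ^ (s + 1)) (q ^ 2) d := by
  rw [qp, qp, qPoch, qPoch, qPoch, Finset.prod_range_add]
  congr 1
  apply Finset.prod_congr rfl
  intro i _
  ring

lemma qbin'_of_le {n k : ℕ} (h : k ≤ n) : qbin' n k = qbin n k := if_pos h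

lemma qbin'_of_gt {n k : ℕ} (h : n < k) : qbin' n k = 0 := if_neg (by omega)

lemma qbin_zero (n : ℕ) : qbin n 0 = 1 := by
  simp [qbin, qp_zero, div_self (mul_ne_zero (qp_ne_zero 0) (qp_ne_zero n)), qp_ne_zero]

lemma qbin_self (n : ℕ) : qbin n n = 1 := by
  simp [qbin, qp_zero, div_self (qp_ne_zero n)]

lemma pascal (n m : ℕ) (hm : 1 ≤ m) :
    qbin' (n + 1) m = qbin' n m + (q ^ 2) ^ (n + 1 - m) * qbin' n (m - 1) := by
  rcases le_or_gt m (n + 1) with h | h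
  · rcases eq_or_lt_of_le h with rfl | h'
    · rw [qbin'_of_le le_rfl, qbin'_of_gt (by omega), qbin'_of_le (by omega)]
      simp [qbin_self]
    · -- 1 ≤ m ≤ n
      have hmn : m ≤ n := by omega
      obtain ⟨r, rfl⟩ := Nat.exists_eq_add_of_le hmn  -- n = m + r
      obtain ⟨p, rfl⟩ := Nat.exists_eq_add_of_le hm   -- m = 1 + p
      rw [qbin'_of_le (by omega), qbin'_of_le (by omega), qbin'_of_le (by omega)]
      simp only [qbin]
      have e1 : 1 + p + r + 1 - (1 + p) = r + 1 := by omega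
      have e2 : 1 + p + r - (1 + p) = r := by omega
      have e3 : 1 + p + r - (1 + p - 1) = r + 1 := by omega
      have e4 : 1 + p - 1 = p := by omega
      rw [e1, e2, e3, e4]
      have h1 : qp (1 + p + r + 1) = qp (1 + p + r) * (1 - (q ^ 2) ^ (1 + p + r + 1)) :=
        qp_succ _
      have h2 : qp (r + 1) = qp r * (1 - (q ^ 2) ^ (r + 1)) := qp_succ _
      have h3 : qp (1 + p) = qp p * (1 - (q ^ 2) ^ (1 + p)) := by
        have := qp_succ p; rw [Nat.add_comm 1 p]; rw [this, Nat.add_comm p 1]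
      have hq1 : (1 : F) - (q ^ 2) ^ (1 + p + r + 1) ≠ 0 := by
        rw [← pow_mul]; exact one_sub_q_pow_ne_zero _ (by omega)
      have hq2 : (1 : F) - (q ^ 2) ^ (r + 1) ≠ 0 := by
        rw [← pow_mul]; exact one_sub_q_pow_ne_zero _ (by omega)
      have hq3 : (1 : F) - (q ^ 2) ^ (1 + p) ≠ 0 := by
        rw [← pow_mul]; exact one_sub_q_pow_ne_zero _ (by omega)
      rw [h1, h2, h3]
      have hkey : (1 - (q ^ 2) ^ (1 + p + r + 1)) =
          (1 - (q ^ 2) ^ (r + 1)) + (q ^ 2) ^ (r + 1) * (1 - (q ^ 2) ^ (1 + p)) := by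
        have : (q ^ 2 : F) ^ (r + 1) * (q ^ 2) ^ (1 + p) = (q ^ 2) ^ (1 + p + r + 1) := by
          rw [← pow_add]; ring_nf
        rw [mul_sub, this]; ring
      rw [hkey]
      field_simp [qp_ne_zero]
  · rw [qbin'_of_gt (by omega), qbin'_of_gt (by omega), qbin'_of_gt (by omega)]
    ring

theorem qbinom (x : F) (n : ℕ) :
    qPoch x (q ^ 2) n =
      ∑ m ∈ Finset.range (n + 1), (-1) ^ m * q ^ (m * (m - 1)) * x ^ m * qbin' n m := by
  induction n with
  | zero =>
    simp [qPoch, qbin'_of_le (le_refl 0), qbin_zero]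
  | succ n ih =>
    rw [qPoch_succ, ih]
    rw [Finset.sum_range_succ' (fun m => (-1) ^ m * q ^ (m * (m - 1)) * x ^ m * qbin' (n + 1) m)]
    have hp : ∀ m ∈ Finset.range (n + 1),
        (-1 : F) ^ (m + 1) * q ^ ((m + 1) * (m + 1 - 1)) * x ^ (m + 1) * qbin' (n + 1) (m + 1)
        = (-1) ^ (m + 1) * q ^ ((m + 1) * m) * x ^ (m + 1) * qbin' n (m + 1)
          + (-(x * (q ^ 2) ^ n)) * ((-1) ^ m * q ^ (m * (m - 1)) * x ^ m * qbin' n m) := by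
      intro m hm
      rw [Finset.mem_range] at hm
      rw [pascal n (m + 1) (by omega)]
      have e1 : m + 1 - 1 = m := by omega
      have e2 : n + 1 - (m + 1) = n - m := by omega
      rw [e1, e2, mul_add]
      congr 1
      have e3 : (q ^ 2 : F) ^ (n - m) = q ^ (2 * (n - m)) := by rw [← pow_mul]
      have e5 : (m + 1) * m + 2 * (n - m) = m * (m - 1) + 2 * n := by
        cases m with
        | zero => omega
        | succ p => have : p + 1 ≤ n := by omega
                    simp [Nat.succ_sub_one]; ring_nf; omega
      have : (q : F) ^ ((m + 1) * m) * q ^ (2 * (n - m)) = q ^ (m * (m - 1)) * q ^ (2 * n) := by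
        rw [← pow_add, ← pow_add, e5]
      calc (-1 : F) ^ (m + 1) * q ^ ((m + 1) * m) * x ^ (m + 1) * ((q ^ 2) ^ (n - m) * qbin' n m)
          = ((-1) ^ (m + 1) * x ^ (m + 1) * qbin' n m) * (q ^ ((m + 1) * m) * (q^2) ^ (n - m)) := by ring
        _ = ((-1) ^ (m + 1) * x ^ (m + 1) * qbin' n m) * (q ^ (m * (m - 1)) * q ^ (2 * n)) := by rw [e3, this]
        _ = -(x * (q ^ 2) ^ n) * ((-1) ^ m * q ^ (m * (m - 1)) * x ^ m * qbin' n m) := by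
            rw [pow_succ (-1 : F) m, pow_succ x m, ← pow_mul]; ring
    rw [Finset.sum_congr rfl hp, Finset.sum_add_distrib]
    have h0 : ((-1 : F) ^ 0 * q ^ (0 * (0 - 1)) * x ^ 0 * qbin' (n + 1) 0)
        = (-1 : F) ^ 0 * q ^ (0 * (0 - 1)) * x ^ 0 * qbin' n 0 := by
      rw [qbin'_of_le (Nat.zero_le _), qbin'_of_le (Nat.zero_le _), qbin_zero, qbin_zero]
    rw [h0]
    have hS : (∑ m ∈ Finset.range (n + 1),
          (-1 : F) ^ (m + 1) * q ^ ((m + 1) * m) * x ^ (m + 1) * qbin' n (m + 1))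
        + (-1 : F) ^ 0 * q ^ (0 * (0 - 1)) * x ^ 0 * qbin' n 0
        = ∑ m ∈ Finset.range (n + 1), (-1) ^ m * q ^ (m * (m - 1)) * x ^ m * qbin' n m := by
      have := Finset.sum_range_succ'
        (fun m => (-1 : F) ^ m * q ^ (m * (m - 1)) * x ^ m * qbin' n m) (n + 1)
      simp only [Nat.add_sub_cancel] at this ⊢
      rw [← this, Finset.sum_range_succ, qbin'_of_gt (by omega)]
      simp
    have hX : (∑ m ∈ Finset.range (n + 1),
          (-(x * (q ^ 2) ^ n)) * ((-1 : F) ^ m * q ^ (m * (m - 1)) * x ^ m * qbin' n m))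
        = (-(x * (q ^ 2) ^ n)) *
          ∑ m ∈ Finset.range (n + 1), (-1 : F) ^ m * q ^ (m * (m - 1)) * x ^ m * qbin' n m := by
      rw [Finset.mul_sum]
    rw [add_right_comm, hS, hX]
    ring

lemma qbin_mul (k m e : ℕ) :
    qbin (k + (m + e)) (k + m) * qbin (k + m) k = qbin (k + (m + e)) k * qbin (m + e) m := by
  unfold qbin
  have e1 : k + (m + e) - (k + m) = e := by omega
  have e2 : k + m - k = m := by omega
  have e3 : k + (m + e) - k = m + e := by omega
  have e4 : m + e - m = e := by omega
  rw [e1, e2, e3, e4]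
  field_simp [qp_ne_zero]

lemma scalar_id (k m i : ℕ) :
    (-q) ^ (k + m) * q ^ ((k + m) ^ 2) * ((q ^ 2)⁻¹) ^ ((k + m) * i) =
    (-q) ^ k * q ^ (k ^ 2) * ((q ^ 2)⁻¹) ^ (k * i) *
      ((-1) ^ m * q ^ (m * (m - 1)) * ((q ^ 2) ^ (k + 1) * ((q ^ 2)⁻¹) ^ i) ^ m) := by
  rcases m with _ | p
  · simp
  · have e : (p + 1) * (p + 1 - 1) = p * p + p := by rw [Nat.add_sub_cancel]; ring
    rw [e]
    ring

lemma poch_vanish (k d t : ℕ) (ht : t < d) :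
    qPoch ((q ^ 2) ^ (k + 1) * ((q ^ 2)⁻¹) ^ (k + 1 + t)) (q ^ 2) d = 0 := by
  rw [qPoch]
  apply Finset.prod_eq_zero (Finset.mem_range.2 ht)
  have : (q ^ 2 : F) ^ (k + 1) * ((q ^ 2)⁻¹) ^ (k + 1 + t) * (q ^ 2) ^ t = 1 := by
    rw [inv_pow, mul_right_comm, ← pow_add]
    exact mul_inv_cancel₀ (pow_ne_zero _ qsq_ne_zero)
  rw [this]
  ring

lemma poch_shift (i s : ℕ) :
    (q ^ 2 : F) ^ (i + s + 1) * ((q ^ 2)⁻¹) ^ i = (q ^ 2) ^ (s + 1) := by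
  have h : (q ^ 2 : F) ^ (i + s + 1) = (q ^ 2) ^ (s + 1) * (q ^ 2) ^ i := by
    rw [← pow_add]; congr 1; omega
  rw [inv_pow, h, mul_assoc, mul_inv_cancel₀ (pow_ne_zero _ qsq_ne_zero), mul_one]

lemma qbin_ratio (i s d : ℕ) :
    qbin (i + s + d) i * (qp (s + d) / qp s) = qbin (i + s) i * (qp (i + s + d) / qp (i + s)) := by
  unfold qbin
  have e1 : i + s + d - i = s + d := by omega
  have e2 : i + s - i = s := by omega
  rw [e1, e2]
  field_simp [qp_ne_zero]

lemma master (k d : ℕ) (u : F) :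
    ∑ h ∈ Finset.Icc k (k + d),
      (-q) ^ h * q ^ (h ^ 2) * qbin h k * qbin (k + d) h *
        qPoch (u * ((q ^ 2)⁻¹) ^ h) (q ^ 2) (k + d)
    = (-q) ^ k * q ^ (k ^ 2) * qbin (k + d) k *
        qPoch (u * ((q ^ 2)⁻¹) ^ k) (q ^ 2) k * (qp (k + d) / qp k) := by
  -- abbreviations
  set Qi : F := (q ^ 2)⁻¹ with hQi
  -- Step 1: reindex the sum
  rw [← Finset.Ico_add_one_right_eq_Icc, Finset.sum_Ico_eq_sum_range]
  have hrange : k + d + 1 - k = d + 1 := by omega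
  rw [hrange]
  -- Step 2: expand each qPoch and swap sums
  have step2 : ∀ m ∈ Finset.range (d + 1),
      (-q) ^ (k + m) * q ^ ((k + m) ^ 2) * qbin (k + m) k * qbin (k + d) (k + m) *
        qPoch (u * Qi ^ (k + m)) (q ^ 2) (k + d)
      = ∑ i ∈ Finset.range (k + d + 1),
          ((-q) ^ k * q ^ (k ^ 2) * qbin (k + d) k *
            ((-1) ^ i * q ^ (i * (i - 1)) * u ^ i * Qi ^ (k * i) * qbin' (k + d) i)) *
          ((-1) ^ m * q ^ (m * (m - 1)) * ((q ^ 2) ^ (k + 1) * Qi ^ i) ^ m * qbin' d m) := by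
    intro m hm
    rw [Finset.mem_range] at hm
    obtain ⟨e, rfl⟩ : ∃ e, d = m + e := ⟨d - m, by omega⟩
    rw [qbinom (u * Qi ^ (k + m)) (k + (m + e)), Finset.mul_sum]
    apply Finset.sum_congr rfl
    intro i _
    have hmul : qbin (k + (m + e)) (k + m) * qbin (k + m) k
        = qbin (k + (m + e)) k * qbin (m + e) m := qbin_mul k m e
    have hqb : qbin' (m + e) m = qbin (m + e) m := qbin'_of_le (by omega)
    rw [hqb]
    have hpow : (u * Qi ^ (k + m)) ^ i = u ^ i * Qi ^ ((k + m) * i) := by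
      rw [mul_pow, ← pow_mul]
    rw [hpow]
    calc (-q) ^ (k + m) * q ^ ((k + m) ^ 2) * qbin (k + m) k * qbin (k + (m + e)) (k + m) *
          ((-1) ^ i * q ^ (i * (i - 1)) * (u ^ i * Qi ^ ((k + m) * i)) * qbin' (k + (m + e)) i)
        = ((-q) ^ (k + m) * q ^ ((k + m) ^ 2) * Qi ^ ((k + m) * i)) *
          (qbin (k + (m + e)) (k + m) * qbin (k + m) k) *
          ((-1) ^ i * q ^ (i * (i - 1)) * u ^ i * qbin' (k + (m + e)) i) := by ring
      _ = ((-q) ^ k * q ^ (k ^ 2) * Qi ^ (k * i) *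
            ((-1) ^ m * q ^ (m * (m - 1)) * ((q ^ 2) ^ (k + 1) * Qi ^ i) ^ m)) *
          (qbin (k + (m + e)) k * qbin (m + e) m) *
          ((-1) ^ i * q ^ (i * (i - 1)) * u ^ i * qbin' (k + (m + e)) i) := by
          rw [scalar_id k m i, hmul]
      _ = ((-q) ^ k * q ^ (k ^ 2) * qbin (k + (m + e)) k *
            ((-1) ^ i * q ^ (i * (i - 1)) * u ^ i * Qi ^ (k * i) * qbin' (k + (m + e)) i)) *
          ((-1) ^ m * q ^ (m * (m - 1)) * ((q ^ 2) ^ (k + 1) * Qi ^ i) ^ m * qbin (m + e) m) := by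
          ring
  rw [Finset.sum_congr rfl step2, Finset.sum_comm]
  -- Step 4: inner sums are Pochhammers
  have step4 : ∀ i ∈ Finset.range (k + d + 1),
      (∑ m ∈ Finset.range (d + 1),
        ((-q) ^ k * q ^ (k ^ 2) * qbin (k + d) k *
          ((-1) ^ i * q ^ (i * (i - 1)) * u ^ i * Qi ^ (k * i) * qbin' (k + d) i)) *
        ((-1) ^ m * q ^ (m * (m - 1)) * ((q ^ 2) ^ (k + 1) * Qi ^ i) ^ m * qbin' d m))
      = ((-q) ^ k * q ^ (k ^ 2) * qbin (k + d) k *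
          ((-1) ^ i * q ^ (i * (i - 1)) * u ^ i * Qi ^ (k * i) * qbin' (k + d) i)) *
        qPoch ((q ^ 2) ^ (k + 1) * Qi ^ i) (q ^ 2) d := by
    intro i _
    rw [← Finset.mul_sum, qbinom ((q ^ 2) ^ (k + 1) * Qi ^ i) d]
  rw [Finset.sum_congr rfl step4]
  -- Step 5: split the sum; the upper part vanishes
  have hsplit : k + d + 1 = (k + 1) + d := by omega
  rw [hsplit, Finset.sum_range_add]
  have hvan : ∀ t ∈ Finset.range d,
      ((-q) ^ k * q ^ (k ^ 2) * qbin (k + d) k *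
        ((-1) ^ (k + 1 + t) * q ^ ((k + 1 + t) * (k + 1 + t - 1)) * u ^ (k + 1 + t) *
          Qi ^ (k * (k + 1 + t)) * qbin' (k + d) (k + 1 + t))) *
        qPoch ((q ^ 2) ^ (k + 1) * Qi ^ (k + 1 + t)) (q ^ 2) d = 0 := by
    intro t ht
    rw [Finset.mem_range] at ht
    rw [poch_vanish k d t ht, mul_zero]
  rw [Finset.sum_congr rfl hvan, Finset.sum_const_zero, add_zero]
  -- Step 6: identify with the RHS
  rw [qbinom (u * Qi ^ k) k, Finset.mul_sum, Finset.sum_mul]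
  apply Finset.sum_congr rfl
  intro i hi
  rw [Finset.mem_range] at hi
  obtain ⟨s, rfl⟩ : ∃ s, k = i + s := ⟨k - i, by omega⟩
  have h1 : qbin' (i + s + d) i = qbin (i + s + d) i := qbin'_of_le (by omega)
  have h2 : qbin' (i + s) i = qbin (i + s) i := qbin'_of_le (by omega)
  have h3 : qPoch ((q ^ 2) ^ (i + s + 1) * Qi ^ i) (q ^ 2) d
      = qp (s + d) / qp s := by
    rw [hQi, poch_shift i s]
    have := qp_add s d
    rw [eq_div_iff (qp_ne_zero s)]
    rw [this]; ring
  have h4 : (u * Qi ^ (i + s)) ^ i = u ^ i * Qi ^ ((i + s) * i) := by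
    rw [mul_pow, ← pow_mul]
  rw [h1, h2, h3, h4]
  have h5 := qbin_ratio i s d
  linear_combination ((-q) ^ (i + s) * q ^ ((i + s) ^ 2) * qbin (i + s + d) (i + s) *
    ((-1) ^ i * q ^ (i * (i - 1)) * u ^ i * Qi ^ ((i + s) * i))) * h5

/-- The reduced closure of a top twist on `UP[j,k]` (Lemma `lemmaclosure`):
`∑_{h=k}^{j} (−q)^{h−j} q^{k²} [h;k]₊ · a^{−j} q^{j²+h²} [j;h]₊ · (a²q^{2−2j−2h};q²)_j/(q²;q²)_j
 = (−q)^{k−j} a^{−j} q^{2k²+j²} [j;k]₊ · (a²q^{2−2j−2k};q²)_k/(q²;q²)_k`. -/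
theorem closure_TUP (j k : ℕ) (hk : k ≤ j) :
    ∑ h ∈ Finset.Icc k j,
      (-q) ^ ((h : ℤ) - (j : ℤ)) * q ^ (k ^ 2) * qbin h k *
        (a ^ (-(j : ℤ)) * q ^ (j ^ 2 + h ^ 2) * qbin j h *
          (qPoch (a ^ 2 * q ^ (2 - 2 * (j : ℤ) - 2 * (h : ℤ))) (q ^ 2) j / qp j)) =
      (-q) ^ ((k : ℤ) - (j : ℤ)) * a ^ (-(j : ℤ)) * q ^ (2 * k ^ 2 + j ^ 2) * qbin j k *
        (qPoch (a ^ 2 * q ^ (2 - 2 * (j : ℤ) - 2 * (k : ℤ))) (q ^ 2) k / qp k) := by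
  obtain ⟨d, rfl⟩ : ∃ d, j = k + d := ⟨j - k, by omega⟩
  have hnq : (-q : F) ≠ 0 := neg_ne_zero.2 q_ne_zero
  set Qi : F := (q ^ 2)⁻¹ with hQidef
  set u : F := a ^ 2 * q ^ 2 * Qi ^ (k + d) with hu
  have hz : ∀ h : ℕ, (a : F) ^ 2 * q ^ (2 - 2 * ((k + d : ℕ) : ℤ) - 2 * (h : ℤ))
      = u * Qi ^ h := by
    intro h
    have h1 : (q : F) ^ (2 - 2 * ((k + d : ℕ) : ℤ) - 2 * (h : ℤ))
        = q ^ (2 : ℕ) * (q ^ (2 * (k + d)) : F)⁻¹ * ((q ^ (2 * h) : F))⁻¹ := by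
      rw [← zpow_natCast q 2, ← zpow_natCast q (2 * (k + d)), ← zpow_natCast q (2 * h),
          ← zpow_neg, ← zpow_neg, ← zpow_add₀ q_ne_zero, ← zpow_add₀ q_ne_zero]
      congr 1
    rw [h1, hu, hQidef, pow_mul q 2 (k + d), pow_mul q 2 h, ← inv_pow, ← inv_pow]
    ring
  have hA : (a : F) ^ (-((k + d : ℕ) : ℤ)) = (a ^ (k + d))⁻¹ := by
    rw [zpow_neg, zpow_natCast]
  have hB : ∀ h : ℕ, (-q : F) ^ ((h : ℤ) - ((k + d : ℕ) : ℤ)) = (-q) ^ h * ((-q) ^ (k + d))⁻¹ := by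
    intro h
    rw [zpow_sub₀ hnq, zpow_natCast, zpow_natCast, div_eq_mul_inv]
  simp only [hB, hA, hz]
  have hC :
      (∑ h ∈ Finset.Icc k (k + d),
        (-q) ^ h * ((-q) ^ (k + d))⁻¹ * q ^ (k ^ 2) * qbin h k *
          ((a ^ (k + d))⁻¹ * q ^ ((k + d) ^ 2 + h ^ 2) * qbin (k + d) h *
            (qPoch (u * Qi ^ h) (q ^ 2) (k + d) / qp (k + d))))
      = (((-q) ^ (k + d))⁻¹ * (a ^ (k + d))⁻¹ * q ^ (k ^ 2 + (k + d) ^ 2) * (qp (k + d))⁻¹) *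
        ∑ h ∈ Finset.Icc k (k + d),
          (-q) ^ h * q ^ (h ^ 2) * qbin h k * qbin (k + d) h *
            qPoch (u * Qi ^ h) (q ^ 2) (k + d) := by
    rw [Finset.mul_sum]
    apply Finset.sum_congr rfl
    intro h hh
    ring
  rw [hC, master k d u]
  have hcancel : (qp (k + d))⁻¹ * qp (k + d) = 1 := inv_mul_cancel₀ (qp_ne_zero _)
  linear_combination (((-q) ^ (k + d))⁻¹ * (a ^ (k + d))⁻¹ * q ^ (k ^ 2 + (k + d) ^ 2) *
    (-q) ^ k * q ^ (k ^ 2) * qbin (k + d) k * qPoch (u * Qi ^ k) (q ^ 2) k / qp k) * hcancel
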